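/- Let P be an n-dimensional polytope with n+2 facets whose one-dimensional Gale diagram has multiplicities p at −1, q = 1 at 0, and r at +1, with p, r ≥ 2. Then P is combinatorially a pyramid over the product of a (p−1)-simplex and an (r−1)-simplex, and the apex of this pyramid lies on all facets except the one corresponding to the point 0; consequently the apex is contained in n+1 facets and P is not simple. -/

import Mathlib

open Set

/-- The one-dimensional Gale diagram with `q = 1`: `p` facets at `-1`, `r` facets at `+1`,
and one facet at `0`. -/
def galePointPyr {p r : ℕ} : Fin p ⊕ Fin r ⊕ Fin 1 → ℝ :=
  Sum.elim (fun _ => -1) (Sum.elim (fun _ => 1) (fun _ => 0))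

/-- A set `I` of facets determines a face iff `0` lies in the relative interior of the convex
hull of the Gale points of the facets not in `I`. -/
def IsGaleFacePyr {p r : ℕ} (I : Finset (Fin p ⊕ Fin r ⊕ Fin 1)) : Prop :=
  (0 : ℝ) ∈ intrinsicInterior ℝ (convexHull ℝ (galePointPyr '' {a | a ∉ I}))

/-- The facet sitting at the point `0` of the Gale diagram. -/
def zeroFacet {p r : ℕ} : Fin p ⊕ Fin r ⊕ Fin 1 := Sum.inr (Sum.inr 0)

/-- Faces of the product of a `(p-1)`-simplex with an `(r-1)`-simplex, recorded by facet
sets: some facet on each side must be omitted. -/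
def IsProdFace {p r : ℕ} (J : Finset (Fin p ⊕ Fin r)) : Prop :=
  (∃ i : Fin p, Sum.inl i ∉ J) ∧ (∃ j : Fin r, Sum.inr j ∉ J)

/- ## Auxiliary lemmas -/

lemma gale_mem_span {s : Set ℝ} {a b : ℝ} (ha : a ∈ s) (hb : b ∈ s) (hab : a ≠ b) (x : ℝ) :
    x ∈ affineSpan ℝ s := by
  have h1 := subset_affineSpan ℝ s ha
  have h2 := subset_affineSpan ℝ s hb
  have h3 := AffineSubspace.smul_vsub_vadd_mem (affineSpan ℝ s) ((x - b)/(a-b)) h1 h2 h2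
  have : ((x - b)/(a-b)) • (a -ᵥ b) +ᵥ b = x := by
    simp only [vsub_eq_sub, vadd_eq_add, smul_eq_mul]
    field_simp
    ring
  rwa [this] at h3

lemma gale_intrinsic_sub {s : Set ℝ} (hs : ∀ x : ℝ, x ∈ affineSpan ℝ s) :
    intrinsicInterior ℝ s ⊆ interior s := by
  rintro x ⟨y, hy, rfl⟩
  set φ : ℝ → affineSpan ℝ s := fun c => ⟨c, hs c⟩ with hφdef
  have hφ : Continuous φ := Continuous.subtype_mk continuous_id _
  have hU : IsOpen (φ ⁻¹' (interior ((↑) ⁻¹' s : Set (affineSpan ℝ s)))) :=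
    isOpen_interior.preimage hφ
  have hsub0 : φ ⁻¹' (interior ((↑) ⁻¹' s : Set (affineSpan ℝ s))) ⊆
      φ ⁻¹' ((↑) ⁻¹' s : Set (affineSpan ℝ s)) := Set.preimage_mono interior_subset
  have hsub : (φ ⁻¹' (interior ((↑) ⁻¹' s))) ⊆ s := fun c hc => hsub0 hc
  have hmem : (y : ℝ) ∈ φ ⁻¹' (interior ((↑) ⁻¹' s)) := by
    have : φ (y : ℝ) = y := Subtype.ext rfl
    simpa [this] using hy
  exact interior_maximal hsub hU hmem

variable {p r : ℕ}

lemma gale_mem_neg {I : Finset (Fin p ⊕ Fin r ⊕ Fin 1)} :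
    (-1 : ℝ) ∈ galePointPyr '' {a | a ∉ I} ↔ ∃ i : Fin p, Sum.inl i ∉ I := by
  constructor
  · rintro ⟨(i | (j | k)), ha, he⟩
    · exact ⟨i, ha⟩
    · norm_num [galePointPyr] at he
    · norm_num [galePointPyr] at he
  · rintro ⟨i, hi⟩; exact ⟨Sum.inl i, hi, rfl⟩

lemma gale_mem_one {I : Finset (Fin p ⊕ Fin r ⊕ Fin 1)} :
    (1 : ℝ) ∈ galePointPyr '' {a | a ∉ I} ↔ ∃ j : Fin r, Sum.inr (Sum.inl j) ∉ I := by
  constructor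
  · rintro ⟨(i | (j | k)), ha, he⟩
    · norm_num [galePointPyr] at he
    · exact ⟨j, ha⟩
    · norm_num [galePointPyr] at he
  · rintro ⟨j, hj⟩; exact ⟨Sum.inr (Sum.inl j), hj, rfl⟩

lemma gale_mem_zero {I : Finset (Fin p ⊕ Fin r ⊕ Fin 1)} :
    (0 : ℝ) ∈ galePointPyr '' {a | a ∉ I} ↔ zeroFacet (p := p) (r := r) ∉ I := by
  constructor
  · rintro ⟨(i | (j | k)), ha, he⟩
    · norm_num [galePointPyr] at he
    · norm_num [galePointPyr] at he
    · rwa [show (Sum.inr (Sum.inr k) : Fin p ⊕ Fin r ⊕ Fin 1) = zeroFacet by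
        simp [zeroFacet, Subsingleton.elim k 0]] at ha
  · intro h; exact ⟨zeroFacet, h, rfl⟩

/-- The combinatorial characterization of Gale faces. -/
lemma gale_char (I : Finset (Fin p ⊕ Fin r ⊕ Fin 1)) :
    IsGaleFacePyr I ↔
      ((∃ i : Fin p, Sum.inl i ∉ I) ∧ (∃ j : Fin r, Sum.inr (Sum.inl j) ∉ I)) ∨
        I = Finset.univ.erase zeroFacet := by
  constructor
  · intro h
    by_cases hA : ∃ i : Fin p, Sum.inl i ∉ I
    · by_cases hB : ∃ j : Fin r, Sum.inr (Sum.inl j) ∉ I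
      · exact Or.inl ⟨hA, hB⟩
      · exfalso
        push_neg at hB
        have hsub : galePointPyr '' {a | a ∉ I} ⊆ Icc (-1 : ℝ) 0 := by
          rintro x ⟨(i | (j | k)), ha, rfl⟩
          · constructor <;> norm_num [galePointPyr]
          · exact absurd (hB j) ha
          · constructor <;> norm_num [galePointPyr]
        by_cases hC : zeroFacet (p := p) (r := r) ∈ I
        · have himg : galePointPyr '' {a | a ∉ I} = {-1} := by
            ext x
            constructor
            · rintro ⟨(i | (j | k)), ha, rfl⟩
              · rfl
              · exact absurd (hB j) ha
              · exact absurd (by rwa [show (Sum.inr (Sum.inr k) : Fin p ⊕ Fin r ⊕ Fin 1) =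
                  zeroFacet by simp [zeroFacet, Subsingleton.elim k 0]] at ha) (not_not.mpr hC)
            · rintro rfl
              exact gale_mem_neg.mpr hA
          rw [IsGaleFacePyr, himg, convexHull_singleton, intrinsicInterior_singleton] at h
          norm_num at h
        · have h0 : (0 : ℝ) ∈ convexHull ℝ (galePointPyr '' {a | a ∉ I}) :=
            subset_convexHull _ _ (gale_mem_zero.mpr hC)
          have hm : (-1 : ℝ) ∈ convexHull ℝ (galePointPyr '' {a | a ∉ I}) :=
            subset_convexHull _ _ (gale_mem_neg.mpr hA)
          have hint := gale_intrinsic_sub (fun x => gale_mem_span hm h0 (by norm_num) x) h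
          have : (0 : ℝ) ∈ interior (Icc (-1 : ℝ) 0) :=
            interior_mono (convexHull_min hsub (convex_Icc _ _)) hint
          rw [interior_Icc] at this
          exact lt_irrefl _ this.2
    · by_cases hB : ∃ j : Fin r, Sum.inr (Sum.inl j) ∉ I
      · exfalso
        push_neg at hA
        have hsub : galePointPyr '' {a | a ∉ I} ⊆ Icc (0 : ℝ) 1 := by
          rintro x ⟨(i | (j | k)), ha, rfl⟩
          · exact absurd (hA i) ha
          · constructor <;> norm_num [galePointPyr]
          · constructor <;> norm_num [galePointPyr]
        by_cases hC : zeroFacet (p := p) (r := r) ∈ I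
        · have himg : galePointPyr '' {a | a ∉ I} = {1} := by
            ext x
            constructor
            · rintro ⟨(i | (j | k)), ha, rfl⟩
              · exact absurd (hA i) ha
              · rfl
              · exact absurd (by rwa [show (Sum.inr (Sum.inr k) : Fin p ⊕ Fin r ⊕ Fin 1) =
                  zeroFacet by simp [zeroFacet, Subsingleton.elim k 0]] at ha) (not_not.mpr hC)
            · rintro rfl
              exact gale_mem_one.mpr hB
          rw [IsGaleFacePyr, himg, convexHull_singleton, intrinsicInterior_singleton] at h
          norm_num at h
        · have h0 : (0 : ℝ) ∈ convexHull ℝ (galePointPyr '' {a | a ∉ I}) :=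
            subset_convexHull _ _ (gale_mem_zero.mpr hC)
          have hm : (1 : ℝ) ∈ convexHull ℝ (galePointPyr '' {a | a ∉ I}) :=
            subset_convexHull _ _ (gale_mem_one.mpr hB)
          have hint := gale_intrinsic_sub (fun x => gale_mem_span hm h0 (by norm_num) x) h
          have : (0 : ℝ) ∈ interior (Icc (0 : ℝ) 1) :=
            interior_mono (convexHull_min hsub (convex_Icc _ _)) hint
          rw [interior_Icc] at this
          exact lt_irrefl _ this.1
      · push_neg at hA
        push_neg at hB
        by_cases hC : zeroFacet (p := p) (r := r) ∈ I
        · exfalso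
          have himg : galePointPyr '' {a | a ∉ I} = ∅ := by
            ext x
            simp only [mem_image, mem_setOf_eq, mem_empty_iff_false, iff_false, not_exists]
            rintro (i | (j | k)) ⟨ha, _⟩
            · exact ha (hA i)
            · exact ha (hB j)
            · exact ha (by rwa [show (Sum.inr (Sum.inr k) : Fin p ⊕ Fin r ⊕ Fin 1) =
                  zeroFacet by simp [zeroFacet, Subsingleton.elim k 0]])
          rw [IsGaleFacePyr, himg, convexHull_empty, intrinsicInterior_empty] at h
          exact h
        · right
          ext a
          simp only [Finset.mem_erase, Finset.mem_univ, and_true]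
          constructor
          · intro ha
            rintro rfl
            exact hC ha
          · intro ha
            rcases a with i | j | k
            · exact hA i
            · exact hB j
            · exact absurd (by simp [zeroFacet, Subsingleton.elim k 0]) ha
  · rintro (⟨⟨i, hi⟩, ⟨j, hj⟩⟩ | rfl)
    · have hm : (-1 : ℝ) ∈ convexHull ℝ (galePointPyr '' {a | a ∉ I}) :=
        subset_convexHull _ _ ⟨Sum.inl i, hi, rfl⟩
      have h1 : (1 : ℝ) ∈ convexHull ℝ (galePointPyr '' {a | a ∉ I}) :=
        subset_convexHull _ _ ⟨Sum.inr (Sum.inl j), hj, rfl⟩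
      have hseg : Icc (-1 : ℝ) 1 ⊆ convexHull ℝ (galePointPyr '' {a | a ∉ I}) := by
        have := (convex_convexHull ℝ _).segment_subset hm h1
        rwa [segment_eq_Icc (by norm_num : (-1:ℝ) ≤ 1)] at this
      exact interior_subset_intrinsicInterior
        (interior_maximal (Ioo_subset_Icc_self.trans hseg) isOpen_Ioo
          (by norm_num : (0:ℝ) ∈ Ioo (-1:ℝ) 1))
    · have himg : galePointPyr '' {a | a ∉ Finset.univ.erase (zeroFacet (p := p) (r := r))}
          = {0} := by
        ext x
        constructor
        · rintro ⟨(i | (j | k)), ha, rfl⟩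
          · simp [Finset.mem_erase, zeroFacet] at ha
          · simp [Finset.mem_erase, zeroFacet] at ha
          · rfl
        · rintro rfl
          exact ⟨zeroFacet, by simp [Finset.mem_erase], rfl⟩
      rw [IsGaleFacePyr, himg, convexHull_singleton, intrinsicInterior_singleton]
      rfl

/- ## The order isomorphism -/

def embPR : Fin p ⊕ Fin r → Fin p ⊕ Fin r ⊕ Fin 1 := Sum.map id Sum.inl

lemma embPR_inj : Function.Injective (embPR (p := p) (r := r)) := by
  rintro (a | a) (b | b) h <;> simp [embPR] at h <;> simp [h]

lemma embPR_ne_zeroFacet (x : Fin p ⊕ Fin r) : embPR x ≠ zeroFacet := by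
  rcases x with a | a <;> simp [embPR, zeroFacet]

noncomputable def rawToFun (I : Finset (Fin p ⊕ Fin r ⊕ Fin 1)) : Finset (Fin p ⊕ Fin r) × Bool :=
  (I.preimage embPR embPR_inj.injOn, decide (zeroFacet ∈ I))

def rawInv (Jb : Finset (Fin p ⊕ Fin r) × Bool) : Finset (Fin p ⊕ Fin r ⊕ Fin 1) :=
  Jb.1.image embPR ∪ (if Jb.2 then {zeroFacet} else ∅)

lemma mem_rawInv_emb (Jb : Finset (Fin p ⊕ Fin r) × Bool) (x : Fin p ⊕ Fin r) :
    embPR x ∈ rawInv Jb ↔ x ∈ Jb.1 := by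
  by_cases hb : Jb.2 <;>
    simp [rawInv, hb, embPR_inj.eq_iff, embPR_ne_zeroFacet]

lemma mem_rawInv_zero (Jb : Finset (Fin p ⊕ Fin r) × Bool) :
    zeroFacet ∈ rawInv Jb ↔ Jb.2 = true := by
  rw [rawInv, Finset.mem_union]
  constructor
  · rintro (h | h)
    · rcases Finset.mem_image.1 h with ⟨x, _, hx⟩
      exact absurd hx (embPR_ne_zeroFacet x)
    · by_cases hb : Jb.2 = true
      · exact hb
      · simp [hb] at h
  · intro hb
    right
    simp [hb]

lemma raw_left (I : Finset (Fin p ⊕ Fin r ⊕ Fin 1)) : rawInv (rawToFun I) = I := by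
  ext a
  rcases a with i | j | k
  · rw [show (Sum.inl i : Fin p ⊕ Fin r ⊕ Fin 1) = embPR (Sum.inl i) from rfl,
      mem_rawInv_emb]
    simp [rawToFun, Finset.mem_preimage, embPR]
  · rw [show (Sum.inr (Sum.inl j) : Fin p ⊕ Fin r ⊕ Fin 1) = embPR (Sum.inr j) from rfl,
      mem_rawInv_emb]
    simp [rawToFun, Finset.mem_preimage, embPR]
  · rw [show (Sum.inr (Sum.inr k) : Fin p ⊕ Fin r ⊕ Fin 1) = zeroFacet by
        simp [zeroFacet, Subsingleton.elim k 0], mem_rawInv_zero]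
    simp [rawToFun]

lemma raw_right (Jb : Finset (Fin p ⊕ Fin r) × Bool) : rawToFun (rawInv Jb) = Jb := by
  ext1
  · ext x
    rw [rawToFun, Finset.mem_preimage, mem_rawInv_emb]
  · simp only [rawToFun, mem_rawInv_zero]
    simp

lemma raw_le (I I' : Finset (Fin p ⊕ Fin r ⊕ Fin 1)) :
    rawToFun I ≤ rawToFun I' ↔ I ⊆ I' := by
  constructor
  · rintro ⟨h1, h2⟩ a ha
    rcases a with i | j | k
    · have h0 : Sum.inl i ∈ I.preimage embPR embPR_inj.injOn :=
        Finset.mem_preimage.2 (show embPR (Sum.inl i) ∈ I from ha)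
      have h3 : Sum.inl i ∈ I'.preimage embPR embPR_inj.injOn := h1 h0
      exact (Finset.mem_preimage.1 h3 : embPR (Sum.inl i) ∈ I')
    · have h0 : Sum.inr j ∈ I.preimage embPR embPR_inj.injOn :=
        Finset.mem_preimage.2 (show embPR (Sum.inr j) ∈ I from ha)
      have h3 : Sum.inr j ∈ I'.preimage embPR embPR_inj.injOn := h1 h0
      exact (Finset.mem_preimage.1 h3 : embPR (Sum.inr j) ∈ I')
    · have hz : zeroFacet (p := p) (r := r) ∈ I := by
        rwa [show (Sum.inr (Sum.inr k) : Fin p ⊕ Fin r ⊕ Fin 1) = zeroFacet by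
          simp [zeroFacet, Subsingleton.elim k 0]] at ha
      have : zeroFacet (p := p) (r := r) ∈ I' := by
        by_contra hz'
        have h2' : (decide (zeroFacet (p := p) (r := r) ∈ I) : Bool) ≤
            decide (zeroFacet (p := p) (r := r) ∈ I') := h2
        rw [decide_eq_true hz, decide_eq_false hz'] at h2'
        exact (by decide : ¬ ((true : Bool) ≤ false)) h2'
      rwa [show (Sum.inr (Sum.inr k) : Fin p ⊕ Fin r ⊕ Fin 1) = zeroFacet by
        simp [zeroFacet, Subsingleton.elim k 0]]
  · intro h
    refine ⟨fun x hx => ?_, ?_⟩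
    · simp only [rawToFun, Finset.mem_preimage] at hx ⊢
      exact h hx
    by_cases h1 : zeroFacet (p := p) (r := r) ∈ I
    · have := h h1
      simp [rawToFun, h1, this]
    · simp [rawToFun, h1]

lemma cond_toFun (I : Finset (Fin p ⊕ Fin r ⊕ Fin 1)) (h : IsGaleFacePyr I) :
    IsProdFace (rawToFun I).1 ∨ ((rawToFun I).2 = false ∧ (rawToFun I).1 = Finset.univ) := by
  rcases (gale_char I).1 h with ⟨⟨i, hi⟩, ⟨j, hj⟩⟩ | rfl
  · left
    exact ⟨⟨i, by simpa [rawToFun, Finset.mem_preimage, embPR] using hi⟩,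
      ⟨j, by simpa [rawToFun, Finset.mem_preimage, embPR] using hj⟩⟩
  · right
    constructor
    · simp [rawToFun, Finset.mem_erase]
    · ext x
      simp only [rawToFun, Finset.mem_preimage, Finset.mem_erase, Finset.mem_univ,
        and_true, iff_true]
      exact embPR_ne_zeroFacet x
lemma cond_inv (Jb : Finset (Fin p ⊕ Fin r) × Bool)
    (h : IsProdFace Jb.1 ∨ (Jb.2 = false ∧ Jb.1 = Finset.univ)) : IsGaleFacePyr (rawInv Jb) := by
  apply (gale_char _).2
  rcases h with ⟨⟨i, hi⟩, ⟨j, hj⟩⟩ | ⟨hb, hu⟩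
  · left
    refine ⟨⟨i, ?_⟩, ⟨j, ?_⟩⟩
    · rw [show (Sum.inl i : Fin p ⊕ Fin r ⊕ Fin 1) = embPR (Sum.inl i) from rfl,
        mem_rawInv_emb]
      exact hi
    · rw [show (Sum.inr (Sum.inl j) : Fin p ⊕ Fin r ⊕ Fin 1) = embPR (Sum.inr j) from rfl,
        mem_rawInv_emb]
      exact hj
  · right
    ext a
    rcases a with i | j | k
    · rw [show (Sum.inl i : Fin p ⊕ Fin r ⊕ Fin 1) = embPR (Sum.inl i) from rfl,
        mem_rawInv_emb, hu]
      simp [Finset.mem_erase, embPR_ne_zeroFacet]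
    · rw [show (Sum.inr (Sum.inl j) : Fin p ⊕ Fin r ⊕ Fin 1) = embPR (Sum.inr j) from rfl,
        mem_rawInv_emb, hu]
      simp [Finset.mem_erase, embPR_ne_zeroFacet]
    · rw [show (Sum.inr (Sum.inr k) : Fin p ⊕ Fin r ⊕ Fin 1) = zeroFacet by
        simp [zeroFacet, Subsingleton.elim k 0], mem_rawInv_zero, hb]
      simp [Finset.mem_erase]

noncomputable def pyrIso :
    ({I : Finset (Fin p ⊕ Fin r ⊕ Fin 1) // IsGaleFacePyr I}) ≃o
      ({Jb : Finset (Fin p ⊕ Fin r) × Bool //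
          IsProdFace Jb.1 ∨ (Jb.2 = false ∧ Jb.1 = Finset.univ)}) where
  toFun I := ⟨rawToFun I.1, cond_toFun I.1 I.2⟩
  invFun Jb := ⟨rawInv Jb.1, cond_inv Jb.1 Jb.2⟩
  left_inv I := Subtype.ext (raw_left I.1)
  right_inv Jb := Subtype.ext (raw_right Jb.1)
  map_rel_iff' {I I'} := by
    simpa [Subtype.mk_le_mk] using raw_le I.1 I'.1

lemma card_aux {n : ℕ} (hpr : p + 1 + r = n + 2) :
    (Finset.univ.erase (zeroFacet (p := p) (r := r))).card = n + 1 := by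
  rw [Finset.card_erase_of_mem (Finset.mem_univ _), Finset.card_univ]
  simp only [Fintype.card_sum, Fintype.card_fin]
  omega

theorem gale_q_one_is_pyramid {n p r : ℕ}
    (hp : 2 ≤ p) (hr : 2 ≤ r) (hpr : p + 1 + r = n + 2) :
    Nonempty (({I : Finset (Fin p ⊕ Fin r ⊕ Fin 1) // IsGaleFacePyr I}) ≃o
      ({Jb : Finset (Fin p ⊕ Fin r) × Bool //
          IsProdFace Jb.1 ∨ (Jb.2 = false ∧ Jb.1 = Finset.univ)})) ∧
    IsGaleFacePyr (Finset.univ.erase (zeroFacet (p := p) (r := r))) ∧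
    (Finset.univ.erase (zeroFacet (p := p) (r := r))).card = n + 1 ∧
    (∀ J, IsGaleFacePyr J → Finset.univ.erase (zeroFacet (p := p) (r := r)) ⊆ J →
      J = Finset.univ.erase (zeroFacet (p := p) (r := r))) ∧
    ¬ (∀ I : Finset (Fin p ⊕ Fin r ⊕ Fin 1), IsGaleFacePyr I →
        (∀ J, IsGaleFacePyr J → I ⊆ J → J = I) → I.card = n) := by
  have hface : IsGaleFacePyr (Finset.univ.erase (zeroFacet (p := p) (r := r))) :=
    (gale_char _).2 (Or.inr rfl)
  have hmax : ∀ J, IsGaleFacePyr J → Finset.univ.erase (zeroFacet (p := p) (r := r)) ⊆ J →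
      J = Finset.univ.erase (zeroFacet (p := p) (r := r)) := by
    intro J hJ hsub
    rcases (gale_char J).1 hJ with ⟨⟨i, hi⟩, _⟩ | h
    · exact absurd (hsub (by simp [Finset.mem_erase, zeroFacet])) hi
    · exact h
  refine ⟨⟨pyrIso⟩, hface, card_aux hpr, hmax, ?_⟩
  intro h
  have := h _ hface hmax
  rw [card_aux hpr] at this
  omega
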